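/- arXiv:2504.19901 — 2 statements merged into one kernel-verified Lean document; each statement's English description precedes it below -/
import Mathlib

section
/- Let d, n be positive integers, L > 0, ε > 0, and let f : 𝒳 → ℝ^{d×n} be L-Lipschitz with respect to the entrywise Euclidean (Frobenius) norm, where 𝒳 ⊆ ℝ^{d×n}. Suppose 𝒳 is contained in the union of N_x closed Euclidean balls of radius ε/(3L), and suppose f admits an L-Lipschitz extension to the ball centers (e.g. f is the restriction of an L-Lipschitz function defined on all of ℝ^{d×n}). Then there exist a sum-of-linear-transformations layer Linear and a single-head self-attention layer Attn (with weight matrices of suitable dimensions, the attention hidden width proportional to d·N_x) such that for every Z ∈ 𝒳: ‖Attn(Linear(Z)) − f(Z)‖_∞ ≤ ε. -/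
open Matrix

/-- Column-wise softmax of a real matrix. -/
noncomputable def softmax {a b : ℕ} (M : Matrix (Fin a) (Fin b) ℝ) :
    Matrix (Fin a) (Fin b) ℝ :=
  Matrix.of fun i j => Real.exp (M i j) / ∑ k, Real.exp (M k j)

/-- Frobenius (entrywise Euclidean) norm of a real matrix. -/
noncomputable def frob {a b : ℕ} (M : Matrix (Fin a) (Fin b) ℝ) : ℝ :=
  Real.sqrt (∑ r, ∑ c, M r c ^ 2)

namespace AttnApprox

variable {d n Nx : ℕ}

/-- slot index of `k : Fin (2*d*Nx)`. -/
def tk (d Nx : ℕ) (k : Fin (2*d*Nx)) : Fin (2*d) := (finProdFinEquiv.symm k).1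
/-- center index of `k`. -/
def ik (d Nx : ℕ) (k : Fin (2*d*Nx)) : Fin Nx := (finProdFinEquiv.symm k).2

@[simp] lemma tk_mk (t : Fin (2*d)) (i : Fin Nx) :
    tk d Nx (finProdFinEquiv (t, i)) = t := by simp [tk]
@[simp] lemma ik_mk (t : Fin (2*d)) (i : Fin Nx) :
    ik d Nx (finProdFinEquiv (t, i)) = i := by simp [ik]

lemma sum_over_pairs (g : Fin (2*d*Nx) → ℝ) :
    ∑ k, g k = ∑ i : Fin Nx, ∑ t : Fin (2*d), g (finProdFinEquiv (t, i)) := by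
  rw [← Equiv.sum_comp (finProdFinEquiv : Fin (2*d) × Fin Nx ≃ Fin (2*d*Nx)) g,
    Fintype.sum_prod_type]
  exact Finset.sum_comm

noncomputable def w (d : ℕ) (rh t' : Fin (2*d)) : ℝ :=
  if rh.val < d then
    ((if t'.val = rh.val then 1 else 0) - (if t'.val = d + rh.val then 1 else 0))
  else 0

noncomputable def vv (d : ℕ) (r : Fin d) (t' : Fin (2*d)) : ℝ :=
  (if t'.val = r.val then 1 else 0) - (if t'.val = d + r.val then 1 else 0)

noncomputable def u (d Nx : ℕ) (j k : Fin (2*d*Nx)) : ℝ :=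
  1/(2*d) + (if ik d Nx k = ik d Nx j then (1/(4*d)) * w d (tk d Nx j) (tk d Nx k) else 0)

lemma sum_fin_ind {N : ℕ} (m : ℕ) :
    (∑ t : Fin N, if (t : ℕ) = m then (1:ℝ) else 0) = if m < N then 1 else 0 := by
  rcases lt_or_ge m N with h | h
  · rw [if_pos h, Finset.sum_eq_single (⟨m, h⟩ : Fin N)]
    · simp
    · intro b _ hb
      have : (b:ℕ) ≠ m := fun hh => hb (Fin.ext hh)
      simp [this]
    · simp
  · rw [if_neg (not_lt.2 h), Finset.sum_eq_zero]
    intro t _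
    have h1 : (t : ℕ) < N := t.isLt
    have h2 : (t : ℕ) ≠ m := by omega
    simp [h2]

lemma sum_fin_pick {N : ℕ} (m : ℕ) (hm : m < N) (g : Fin N → ℝ) :
    (∑ t : Fin N, if (t : ℕ) = m then g t else 0) = g ⟨m, hm⟩ := by
  rw [Finset.sum_eq_single (⟨m, hm⟩ : Fin N)]
  · simp
  · intro b _ hb
    have : (b:ℕ) ≠ m := fun hh => hb (Fin.ext hh)
    simp [this]
  · simp

lemma sum_w (rh : Fin (2*d)) : ∑ t' : Fin (2*d), w d rh t' = 0 := by
  unfold w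
  rcases lt_or_ge rh.val d with h | h
  · have h1 : rh.val < 2*d := by omega
    have h2 : d + rh.val < 2*d := by omega
    simp only [if_pos h]
    rw [Finset.sum_sub_distrib, sum_fin_ind, sum_fin_ind, if_pos h1, if_pos h2, sub_self]
  · simp [not_lt.2 h]

lemma sum_vv (hd : 0 < d) (r : Fin d) : ∑ t' : Fin (2*d), vv d r t' = 0 := by
  unfold vv
  have h1 : r.val < 2*d := by omega
  have h2 : d + r.val < 2*d := by omega
  rw [Finset.sum_sub_distrib, sum_fin_ind, sum_fin_ind, if_pos h1, if_pos h2, sub_self]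

lemma sum_vv_w (hd : 0 < d) (r : Fin d) (rh : Fin (2*d)) :
    ∑ t' : Fin (2*d), vv d r t' * w d rh t' = if rh.val = r.val then 2 else 0 := by
  unfold w
  rcases lt_or_ge rh.val d with h | h
  · have h1 : rh.val < 2*d := by omega
    have h2 : d + rh.val < 2*d := by omega
    simp only [if_pos h, mul_sub, mul_ite, mul_one, mul_zero, Finset.sum_sub_distrib]
    rw [sum_fin_pick rh.val h1 (vv d r), sum_fin_pick (d + rh.val) h2 (vv d r)]
    unfold vv
    have e1 : d + rh.val ≠ r.val := by omega
    have e2 : rh.val ≠ d + r.val := by omega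
    have e3 : (d + rh.val = d + r.val) ↔ (rh.val = r.val) := by omega
    simp only [e1, e2, if_false, e3]
    split_ifs <;> norm_num
  · have e : rh.val ≠ r.val := by omega
    simp [not_lt.2 h, e]

lemma u_pos (hd : 0 < d) (j k : Fin (2*d*Nx)) : 0 < u d Nx j k := by
  have hdd : (0:ℝ) < d := by exact_mod_cast hd
  have hw : -1 ≤ w d (tk d Nx j) (tk d Nx k) := by
    unfold w; split_ifs <;> norm_num
  have key : (1/(4*(d:ℝ))) * (-1) ≤ (1/(4*(d:ℝ))) * w d (tk d Nx j) (tk d Nx k) :=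
    mul_le_mul_of_nonneg_left hw (by positivity)
  have heq : 1/(2*(d:ℝ)) - 1/(4*d) = 1/(4*d) := by field_simp; ring
  have hp : (0:ℝ) < 1/(4*d) := by positivity
  unfold u
  split_ifs with h
  · nlinarith
  · positivity

lemma sum_u (hd : 0 < d) (j : Fin (2*d*Nx)) (i' : Fin Nx) :
    ∑ t' : Fin (2*d), u d Nx j (finProdFinEquiv (t', i')) = 1 := by
  unfold u
  simp only [tk_mk, ik_mk, Finset.sum_add_distrib]
  have hdd : (0:ℝ) < d := by exact_mod_cast hd
  rcases eq_or_ne i' (ik d Nx j) with h | h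
  · simp only [if_pos h, ← Finset.mul_sum, sum_w, mul_zero, add_zero,
      Finset.sum_const, Finset.card_univ, Fintype.card_fin, nsmul_eq_mul]
    push_cast
    field_simp
  · simp only [if_neg h, Finset.sum_const, Finset.card_univ, Fintype.card_fin,
      nsmul_eq_mul, add_zero]
    push_cast
    field_simp
    ring

lemma sum_vv_u (hd : 0 < d) (r : Fin d) (j : Fin (2*d*Nx)) (i' : Fin Nx) :
    ∑ t' : Fin (2*d), vv d r t' * u d Nx j (finProdFinEquiv (t', i'))
      = if i' = ik d Nx j ∧ (tk d Nx j).val = r.val then 1/(2*(d:ℝ)) else 0 := by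
  have hdd : (0:ℝ) < d := by exact_mod_cast hd
  unfold u
  simp only [tk_mk, ik_mk, mul_add, Finset.sum_add_distrib]
  rw [← Finset.sum_mul, sum_vv hd, zero_mul, zero_add]
  rcases eq_or_ne i' (ik d Nx j) with h | h
  · simp only [if_pos h, h, true_and, if_true]
    have key : ∀ t' : Fin (2*d), vv d r t' * (1/(4*(d:ℝ)) * w d (tk d Nx j) t')
        = (1/(4*(d:ℝ))) * (vv d r t' * w d (tk d Nx j) t') := fun t' => by ring
    rw [Finset.sum_congr rfl (fun t' _ => key t'), ← Finset.mul_sum, sum_vv_w hd]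
    split_ifs with h2
    · field_simp
      ring
    · ring
  · simp [h]

noncomputable def sAff (centers : Fin Nx → Matrix (Fin d) (Fin n) ℝ) (i : Fin Nx)
    (Z : Matrix (Fin d) (Fin n) ℝ) : ℝ :=
  (∑ a, ∑ c, Z a c * centers i a c) - (∑ a, ∑ c, (centers i a c)^2)/2

noncomputable def Pmat (d Nx : ℕ) (a : Fin d) : Matrix (Fin (2*d*Nx+1)) (Fin d) ℝ :=
  Matrix.of fun m r' => if m = 0 ∧ r' = a then 1 else 0

noncomputable def Qmat (d Nx n : ℕ) (lam : ℝ)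
    (centers : Fin Nx → Matrix (Fin d) (Fin n) ℝ) (a : Fin d) :
    Matrix (Fin n) (Fin (2*d*Nx)) ℝ :=
  Matrix.of fun c k => lam * centers (ik d Nx k) a c

noncomputable def Rmat (d Nx n : ℕ) (lam : ℝ)
    (centers : Fin Nx → Matrix (Fin d) (Fin n) ℝ) :
    Matrix (Fin (2*d*Nx+1)) (Fin (2*d*Nx)) ℝ :=
  Matrix.of fun m k =>
    Fin.cases (-(lam * (∑ a, ∑ c, (centers (ik d Nx k) a c)^2)/2))
      (fun k' => if k' = k then (1:ℝ) else 0) m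

lemma Y_apply_zero (hd : 0 < d) (lam : ℝ) (centers : Fin Nx → Matrix (Fin d) (Fin n) ℝ)
    (Z : Matrix (Fin d) (Fin n) ℝ) (k : Fin (2*d*Nx)) :
    ((∑ a : Fin d, Pmat d Nx a * Z * Qmat d Nx n lam centers a)
        + Rmat d Nx n lam centers) 0 k
      = lam * sAff centers (ik d Nx k) Z := by
  simp only [Matrix.add_apply, Matrix.sum_apply, Matrix.mul_apply, Pmat, Qmat, Rmat,
    Matrix.of_apply, Fin.cases_zero]
  simp only [true_and, ite_mul, one_mul, zero_mul, Finset.sum_ite_eq', Finset.mem_univ,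
    ite_true]
  have h1 : ∑ a : Fin d, ∑ c : Fin n, Z a c * (lam * centers (ik d Nx k) a c)
      = lam * ∑ a : Fin d, ∑ c : Fin n, Z a c * centers (ik d Nx k) a c := by
    rw [Finset.mul_sum]
    refine Finset.sum_congr rfl fun a _ => ?_
    rw [Finset.mul_sum]
    exact Finset.sum_congr rfl fun c _ => by ring
  rw [h1]
  unfold sAff
  ring

lemma Y_apply_succ (hd : 0 < d) (lam : ℝ) (centers : Fin Nx → Matrix (Fin d) (Fin n) ℝ)
    (Z : Matrix (Fin d) (Fin n) ℝ) (k' k : Fin (2*d*Nx)) :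
    ((∑ a : Fin d, Pmat d Nx a * Z * Qmat d Nx n lam centers a)
        + Rmat d Nx n lam centers) k'.succ k
      = if k' = k then 1 else 0 := by
  simp only [Matrix.add_apply, Matrix.sum_apply, Matrix.mul_apply, Pmat, Qmat, Rmat,
    Matrix.of_apply, Fin.cases_succ]
  simp only [Fin.succ_ne_zero, false_and, if_false, zero_mul, Finset.sum_const_zero,
    zero_add]

noncomputable def Gmat (d Nx : ℕ) : Matrix (Fin (2*d*Nx+1)) (Fin (2*d*Nx+1)) ℝ :=
  Matrix.of fun m m' =>
    Fin.cases (Fin.cases 0 (fun _ => 1) m')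
      (fun k => Fin.cases 0 (fun j => Real.log (u d Nx j k)) m') m

noncomputable def WVmat (d Nx : ℕ) : Matrix (Fin d) (Fin (2*d*Nx+1)) ℝ :=
  Matrix.of fun r m => Fin.cases 0 (fun k => vv d r (tk d Nx k)) m

noncomputable def WOmat (d Nx n : ℕ) (F : Fin Nx → Matrix (Fin d) (Fin n) ℝ) :
    Matrix (Fin (2*d*Nx)) (Fin n) ℝ :=
  Matrix.of fun j c =>
    if h : (tk d Nx j).val < d then F (ik d Nx j) ⟨(tk d Nx j).val, h⟩ c * (2*d) else 0

lemma score_eq (hd : 0 < d) (lam : ℝ) (centers : Fin Nx → Matrix (Fin d) (Fin n) ℝ)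
    (Z : Matrix (Fin d) (Fin n) ℝ) (Y : Matrix (Fin (2*d*Nx+1)) (Fin (2*d*Nx)) ℝ)
    (hY0 : ∀ k, Y 0 k = lam * sAff centers (ik d Nx k) Z)
    (hYs : ∀ k' k : Fin (2*d*Nx), Y k'.succ k = if k' = k then 1 else 0)
    (k j : Fin (2*d*Nx)) :
    (Yᵀ * (Gmat d Nx * Y)) k j
      = lam * sAff centers (ik d Nx k) Z + Real.log (u d Nx j k) := by
  have hGY0 : (Gmat d Nx * Y) 0 j = 1 := by
    rw [Matrix.mul_apply, Fin.sum_univ_succ]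
    simp only [Gmat, Matrix.of_apply, Fin.cases_zero, Fin.cases_succ, zero_mul, hYs,
      mul_ite, mul_one, mul_zero, one_mul, Finset.sum_ite_eq', Finset.mem_univ, ite_true,
      zero_add]
  have hGYs : ∀ k'' : Fin (2*d*Nx), (Gmat d Nx * Y) k''.succ j = Real.log (u d Nx j k'') := by
    intro k''
    rw [Matrix.mul_apply, Fin.sum_univ_succ]
    simp only [Gmat, Matrix.of_apply, Fin.cases_zero, Fin.cases_succ, zero_mul, hYs,
      mul_ite, mul_one, mul_zero, one_mul, Finset.sum_ite_eq', Finset.mem_univ, ite_true,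
      zero_add]
  rw [Matrix.mul_apply, Fin.sum_univ_succ]
  simp only [Matrix.transpose_apply, hY0, hGY0, mul_one, hGYs, hYs, ite_mul, one_mul, zero_mul,
    Finset.sum_ite_eq', Finset.mem_univ, ite_true]

lemma softmax_score (hd : 0 < d) (lam : ℝ) (centers : Fin Nx → Matrix (Fin d) (Fin n) ℝ)
    (Z : Matrix (Fin d) (Fin n) ℝ) (Y : Matrix (Fin (2*d*Nx+1)) (Fin (2*d*Nx)) ℝ)
    (hY0 : ∀ k, Y 0 k = lam * sAff centers (ik d Nx k) Z)
    (hYs : ∀ k' k : Fin (2*d*Nx), Y k'.succ k = if k' = k then 1 else 0)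
    (k j : Fin (2*d*Nx)) :
    softmax (Yᵀ * (Gmat d Nx * Y)) k j
      = Real.exp (lam * sAff centers (ik d Nx k) Z) * u d Nx j k
        / (∑ i' : Fin Nx, Real.exp (lam * sAff centers i' Z)) := by
  unfold softmax
  rw [Matrix.of_apply]
  have hnum : ∀ k' : Fin (2*d*Nx), Real.exp ((Yᵀ * (Gmat d Nx * Y)) k' j)
      = Real.exp (lam * sAff centers (ik d Nx k') Z) * u d Nx j k' := by
    intro k'
    rw [score_eq hd lam centers Z Y hY0 hYs, Real.exp_add, Real.exp_log (u_pos hd j k')]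
  simp only [hnum]
  congr 1
  rw [sum_over_pairs (fun k' => Real.exp (lam * sAff centers (ik d Nx k') Z) * u d Nx j k')]
  refine Finset.sum_congr rfl fun i' _ => ?_
  simp only [ik_mk]
  rw [← Finset.mul_sum, sum_u hd j i', mul_one]

lemma output_eq (hd : 0 < d) (hNx : 0 < Nx) (lam : ℝ) (centers : Fin Nx → Matrix (Fin d) (Fin n) ℝ)
    (Z : Matrix (Fin d) (Fin n) ℝ) (Y : Matrix (Fin (2*d*Nx+1)) (Fin (2*d*Nx)) ℝ)
    (hY0 : ∀ k, Y 0 k = lam * sAff centers (ik d Nx k) Z)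
    (hYs : ∀ k' k : Fin (2*d*Nx), Y k'.succ k = if k' = k then 1 else 0)
    (F : Fin Nx → Matrix (Fin d) (Fin n) ℝ) (r : Fin d) (c : Fin n) :
    (WVmat d Nx * Y * softmax (Yᵀ * (Gmat d Nx * Y)) * WOmat d Nx n F) r c
      = ∑ i : Fin Nx, (Real.exp (lam * sAff centers i Z)
          / (∑ i' : Fin Nx, Real.exp (lam * sAff centers i' Z))) * F i r c := by
  have hdd : (0:ℝ) < d := by exact_mod_cast hd
  have hWVY : ∀ k, (WVmat d Nx * Y) r k = vv d r (tk d Nx k) := by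
    intro k
    rw [Matrix.mul_apply, Fin.sum_univ_succ]
    simp only [WVmat, Matrix.of_apply, Fin.cases_zero, Fin.cases_succ, zero_mul, hYs,
      mul_ite, mul_one, mul_zero, Finset.sum_ite_eq', Finset.mem_univ, ite_true, zero_add]
  set Zs := ∑ i' : Fin Nx, Real.exp (lam * sAff centers i' Z) with hZs
  have hVS : ∀ j, (WVmat d Nx * Y * softmax (Yᵀ * (Gmat d Nx * Y))) r j
      = Real.exp (lam * sAff centers (ik d Nx j) Z) / Zs
        * (if (tk d Nx j).val = r.val then 1/(2*(d:ℝ)) else 0) := by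
    intro j
    rw [Matrix.mul_apply]
    simp only [hWVY, softmax_score hd lam centers Z Y hY0 hYs]
    rw [sum_over_pairs (fun k => vv d r (tk d Nx k)
      * (Real.exp (lam * sAff centers (ik d Nx k) Z) * u d Nx j k / Zs))]
    have inner : ∀ i' : Fin Nx,
        (∑ t' : Fin (2*d), vv d r (tk d Nx (finProdFinEquiv (t', i')))
          * (Real.exp (lam * sAff centers (ik d Nx (finProdFinEquiv (t', i'))) Z)
            * u d Nx j (finProdFinEquiv (t', i')) / Zs))
        = (Real.exp (lam * sAff centers i' Z) / Zs)
          * ∑ t' : Fin (2*d), vv d r t' * u d Nx j (finProdFinEquiv (t', i')) := by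
      intro i'
      rw [Finset.mul_sum]
      refine Finset.sum_congr rfl fun t' _ => ?_
      simp only [tk_mk, ik_mk]
      ring
    simp only [inner, sum_vv_u hd r j]
    have term : ∀ i' : Fin Nx, (Real.exp (lam * sAff centers i' Z) / Zs)
        * (if i' = ik d Nx j ∧ (tk d Nx j).val = r.val then 1/(2*(d:ℝ)) else 0)
        = if i' = ik d Nx j then (Real.exp (lam * sAff centers i' Z) / Zs)
            * (if (tk d Nx j).val = r.val then 1/(2*(d:ℝ)) else 0) else 0 := by
      intro i'
      by_cases h1 : i' = ik d Nx j <;> by_cases h2 : (tk d Nx j).val = r.val <;>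
        simp [h1, h2]
    simp only [term]
    rw [Finset.sum_ite_eq' Finset.univ (ik d Nx j)]
    simp
  rw [Matrix.mul_apply]
  simp only [hVS]
  rw [sum_over_pairs (fun j => Real.exp (lam * sAff centers (ik d Nx j) Z) / Zs
    * (if (tk d Nx j).val = r.val then 1/(2*(d:ℝ)) else 0) * WOmat d Nx n F j c)]
  refine Finset.sum_congr rfl fun i _ => ?_
  have hr2 : (r.val : ℕ) < 2*d := by omega
  have step : ∀ t : Fin (2*d),
      Real.exp (lam * sAff centers (ik d Nx (finProdFinEquiv (t, i))) Z) / Zs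
        * (if (tk d Nx (finProdFinEquiv (t, i))).val = r.val then 1/(2*(d:ℝ)) else 0)
        * WOmat d Nx n F (finProdFinEquiv (t, i)) c
      = if (t : ℕ) = r.val then Real.exp (lam * sAff centers i Z) / Zs
          * (1/(2*(d:ℝ))) * WOmat d Nx n F (finProdFinEquiv (t, i)) c else 0 := by
    intro t
    simp only [tk_mk, ik_mk]
    by_cases h : (t : ℕ) = r.val <;> simp [h]
  simp only [step]
  rw [sum_fin_pick r.val hr2]
  have hWO : WOmat d Nx n F (finProdFinEquiv ((⟨r.val, hr2⟩ : Fin (2*d)), i)) c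
      = F i r c * (2*(d:ℝ)) := by
    unfold WOmat
    rw [Matrix.of_apply]
    simp only [tk_mk, ik_mk]
    rw [dif_pos (show ((⟨r.val, hr2⟩ : Fin (2*d)) : ℕ) < d from r.isLt)]
  rw [hWO]
  have hZspos : 0 < Zs := by
    rw [hZs]
    exact Finset.sum_pos (fun i' _ => Real.exp_pos _)
      ⟨⟨0, hNx⟩, Finset.mem_univ _⟩
  have hZs0 : Zs ≠ 0 := ne_of_gt hZspos
  field_simp

lemma frob_nonneg {a b : ℕ} (M : Matrix (Fin a) (Fin b) ℝ) : 0 ≤ frob M :=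
  Real.sqrt_nonneg _

lemma frob_sq {a b : ℕ} (M : Matrix (Fin a) (Fin b) ℝ) :
    (frob M)^2 = ∑ r, ∑ c, M r c ^ 2 := by
  unfold frob
  rw [Real.sq_sqrt]
  exact Finset.sum_nonneg fun r _ => Finset.sum_nonneg fun c _ => sq_nonneg _

lemma abs_entry_le_frob {a b : ℕ} (M : Matrix (Fin a) (Fin b) ℝ) (r : Fin a) (c : Fin b) :
    |M r c| ≤ frob M := by
  rw [← Real.sqrt_sq_eq_abs]
  apply Real.sqrt_le_sqrt
  calc M r c ^ 2 ≤ ∑ c', M r c' ^ 2 :=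
        Finset.single_le_sum (f := fun c' => M r c' ^ 2)
          (fun c' _ => sq_nonneg _) (Finset.mem_univ c)
    _ ≤ ∑ r', ∑ c', M r' c' ^ 2 :=
        Finset.single_le_sum (f := fun r' => ∑ c', M r' c' ^ 2)
          (fun r' _ => Finset.sum_nonneg fun c' _ => sq_nonneg _) (Finset.mem_univ r)

lemma frob_sub_comm {a b : ℕ} (A B : Matrix (Fin a) (Fin b) ℝ) :
    frob (A - B) = frob (B - A) := by
  unfold frob
  congr 1
  refine Finset.sum_congr rfl fun r _ => Finset.sum_congr rfl fun c _ => ?_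
  simp only [Matrix.sub_apply]
  ring

lemma sAff_eq (centers : Fin Nx → Matrix (Fin d) (Fin n) ℝ) (i : Fin Nx)
    (Z : Matrix (Fin d) (Fin n) ℝ) :
    sAff centers i Z = (∑ a, ∑ c, Z a c ^ 2)/2 - (frob (Z - centers i))^2/2 := by
  rw [frob_sq]
  unfold sAff
  have key : ∀ a c, ((Z - centers i) a c)^2
      = Z a c ^ 2 - 2*(Z a c * centers i a c) + (centers i a c)^2 := by
    intro a c; simp only [Matrix.sub_apply]; ring
  simp only [key, Finset.sum_add_distrib, Finset.sum_sub_distrib, ← Finset.mul_sum]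
  ring

lemma sum_step {Nx : ℕ} (ε : ℝ) (e g : Fin Nx → ℝ) (S : ℝ)
    (hS : S = ∑ i' : Fin Nx, e i') (istar : Fin Nx)
    (hepos : ∀ i, 0 < e i) (hNxR : (0:ℝ) < Nx) (hε : 0 < ε)
    (key : ∀ i, e i * g i ≤ (2*ε/3) * e i + (ε/(3*Nx)) * e istar) :
    ∑ i, e i * g i ≤ ε * S := by
  calc ∑ i, e i * g i ≤ ∑ i, ((2*ε/3) * e i + (ε/(3*Nx)) * e istar) :=
        Finset.sum_le_sum fun i _ => key i
    _ = (2*ε/3) * S + Nx * ((ε/(3*Nx)) * e istar) := by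
        rw [Finset.sum_add_distrib, ← Finset.mul_sum, Finset.sum_const, Finset.card_univ,
          Fintype.card_fin, nsmul_eq_mul, hS]
    _ = (2*ε/3) * S + (ε/3) * e istar * ((Nx:ℝ)/Nx) := by ring
    _ = (2*ε/3) * S + (ε/3) * e istar := by
        rw [div_self (ne_of_gt hNxR), mul_one]
    _ ≤ (2*ε/3) * S + (ε/3) * S := by
        have h5 : e istar ≤ S := hS ▸ Finset.single_le_sum
          (fun i (_ : i ∈ Finset.univ) => (hepos i).le) (Finset.mem_univ istar)
        have h6 : (ε/3) * e istar ≤ (ε/3) * S :=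
          mul_le_mul_of_nonneg_left h5 (by linarith)
        linarith
    _ = ε * S := by ring

lemma assemble {Nx : ℕ} (ε S : ℝ) (e g F : Fin Nx → ℝ) (x : ℝ)
    (hS : S = ∑ i' : Fin Nx, e i') (hSpos : 0 < S)
    (hepos : ∀ i, 0 < e i)
    (hg : ∀ i, g i = |F i - x|)
    (hsum : ∑ i, e i * g i ≤ ε * S) :
    |(∑ i : Fin Nx, (e i / S) * F i) - x| ≤ ε := by
  have hsplit : (∑ i : Fin Nx, (e i / S) * F i) - x
      = ∑ i : Fin Nx, (e i / S) * (F i - x) := by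
    rw [Finset.sum_congr rfl fun i _ =>
      (mul_sub (e i / S) _ _ : (e i / S) * (F i - x) = _)]
    rw [Finset.sum_sub_distrib, ← Finset.sum_mul]
    have h7 : (∑ i, e i / S) = 1 := by
      rw [← Finset.sum_div, ← hS, div_self (ne_of_gt hSpos)]
    rw [h7, one_mul]
  rw [hsplit]
  calc |∑ i : Fin Nx, (e i / S) * (F i - x)|
      ≤ ∑ i : Fin Nx, |(e i / S) * (F i - x)| :=
        Finset.abs_sum_le_sum_abs _ _
    _ = ∑ i : Fin Nx, (e i / S) * g i := by
        refine Finset.sum_congr rfl fun i _ => ?_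
        rw [abs_mul, abs_of_pos (div_pos (hepos i) hSpos), hg]
    _ = (∑ i : Fin Nx, e i * g i) / S := by
        rw [Finset.sum_div]
        exact Finset.sum_congr rfl fun i _ => by ring
    _ ≤ ε := by
        rw [div_le_iff₀ hSpos]
        linarith [hsum]

lemma final_bound_gen (hd : 0 < d) (hNx : 0 < Nx) (L ε lam : ℝ) (hL : 0 < L) (hε : 0 < ε)
    (hlam : lam = 12*Nx*L^2/ε^2)
    (f : Matrix (Fin d) (Fin n) ℝ → Matrix (Fin d) (Fin n) ℝ)
    (hfLip : ∀ Z₁ Z₂, frob (f Z₁ - f Z₂) ≤ L * frob (Z₁ - Z₂))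
    (centers : Fin Nx → Matrix (Fin d) (Fin n) ℝ)
    (Z : Matrix (Fin d) (Fin n) ℝ) (istar : Fin Nx)
    (hstar : frob (Z - centers istar) ≤ ε / (3 * L)) (r : Fin d) (c : Fin n)
    (e : Fin Nx → ℝ) (he : ∀ i, e i = Real.exp (lam * sAff centers i Z)) :
    |(∑ i : Fin Nx, (e i / ∑ i' : Fin Nx, e i') * f (centers i) r c) - f Z r c| ≤ ε := by
  have hNxR : (0:ℝ) < Nx := by exact_mod_cast hNx
  have hlampos : 0 < lam := by rw [hlam]; positivity
  have hepos : ∀ i, 0 < e i := fun i => by rw [he i]; exact Real.exp_pos _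
  set S : ℝ := ∑ i' : Fin Nx, e i' with hS
  have hSpos : 0 < S := Finset.sum_pos (fun i' _ => hepos i') ⟨istar, Finset.mem_univ _⟩
  set D : Fin Nx → ℝ := fun i => frob (Z - centers i) with hD
  set g : Fin Nx → ℝ := fun i => |f (centers i) r c - f Z r c| with hg
  set ρ : ℝ := ε / (3*L) with hρ
  have hρpos : 0 < ρ := by rw [hρ]; positivity
  have hDstar : D istar ≤ ρ := by rw [hD, hρ]; exact hstar
  -- entrywise Lipschitz bound
  have hgD : ∀ i, g i ≤ L * D i := by
    intro i
    calc g i = |(f (centers i) - f Z) r c| := by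
          rw [hg]; simp [Matrix.sub_apply]
      _ ≤ frob (f (centers i) - f Z) := abs_entry_le_frob _ r c
      _ ≤ L * frob (centers i - Z) := hfLip _ _
      _ = L * D i := by rw [hD, frob_sub_comm]
  have hgnonneg : ∀ i, 0 ≤ g i := fun i => by rw [hg]; exact abs_nonneg _
  have hDnonneg : ∀ i, 0 ≤ D i := fun i => by rw [hD]; exact frob_nonneg _
  have hdiffkey : ∀ i, lam * sAff centers i Z - lam * sAff centers istar Z
      = -(lam * ((D i)^2 - (D istar)^2)/2) := by
    intro i
    rw [sAff_eq, sAff_eq, hD]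
    ring
  clear_value S D g ρ
  clear hfLip hstar
  -- key per-index bound
  have key : ∀ i, e i * g i ≤ (2*ε/3) * e i + (ε/(3*Nx)) * e istar := by
    intro i
    have hei_pos : (0:ℝ) < e i := hepos i
    have estar_pos : (0:ℝ) < e istar := hepos istar
    rcases le_or_gt (D i) (2*ρ) with hnear | hfar
    · have h1 : g i ≤ 2*ε/3 := by
        calc g i ≤ L * D i := hgD i
          _ ≤ L * (2*ρ) := mul_le_mul_of_nonneg_left hnear (le_of_lt hL)
          _ = 2*ε/3 := by rw [hρ]; field_simp
      have hb1 : e i * g i ≤ (2*ε/3) * e i := by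
        rw [mul_comm (2*ε/3)]
        exact mul_le_mul_of_nonneg_left h1 hei_pos.le
      have hb2 : (0:ℝ) ≤ (ε/(3*Nx)) * e istar :=
        mul_nonneg (by positivity) (hepos istar).le
      exact le_trans hb1 (le_add_of_nonneg_right hb2)
    · -- far case
      have hDpos : 0 < D i := lt_trans (by linarith) hfar
      have hden : (0:ℝ) < 3*lam/8 * (D i)^2 :=
        mul_pos (by linarith) (pow_pos hDpos 2)
      have hq : ρ^2 ≤ (D i)^2/4 := by nlinarith [hρpos, hfar]
      have hqstar : (D istar)^2 ≤ ρ^2 := by nlinarith [hDnonneg istar, hDstar, hρpos]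
      have hratio : e i = e istar
          * Real.exp (lam * sAff centers i Z - lam * sAff centers istar Z) := by
        rw [he i, he istar, ← Real.exp_add]
        ring_nf
      have hdiff := hdiffkey i
      have hexp1 : Real.exp (lam * sAff centers i Z - lam * sAff centers istar Z)
          ≤ Real.exp (-(3*lam/8 * (D i)^2)) := by
        rw [hdiff]
        apply Real.exp_le_exp.2
        nlinarith [hlampos, hq, hqstar]
      have hexp2 : Real.exp (-(3*lam/8 * (D i)^2)) ≤ 1/(3*lam/8 * (D i)^2) := by
        rw [Real.exp_neg, inv_eq_one_div]
        apply div_le_div_of_nonneg_left (by norm_num) hden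
        have := Real.add_one_le_exp (3*lam/8 * (D i)^2)
        nlinarith
      have hei : e i ≤ e istar / (3*lam/8 * (D i)^2) := by
        rw [hratio]
        calc e istar * Real.exp (lam * sAff centers i Z - lam * sAff centers istar Z)
            ≤ e istar * (1/(3*lam/8 * (D i)^2)) :=
              mul_le_mul_of_nonneg_left (le_trans hexp1 hexp2) estar_pos.le
          _ = e istar / (3*lam/8 * (D i)^2) := by ring
      have hgi : g i ≤ L * D i := hgD i
      have h2 : e i * g i ≤ e istar * (L * D i) / (3*lam/8 * (D i)^2) := by
        calc e i * g i ≤ e i * (L * D i) :=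
              mul_le_mul_of_nonneg_left hgi hei_pos.le
          _ ≤ (e istar / (3*lam/8 * (D i)^2)) * (L * D i) :=
              mul_le_mul_of_nonneg_right hei (mul_nonneg hL.le (hDnonneg i))
          _ = e istar * (L * D i) / (3*lam/8 * (D i)^2) := by ring
      have h3 : e istar * (L * D i) / (3*lam/8 * (D i)^2) ≤ (ε/(3*Nx)) * e istar := by
        rw [div_le_iff₀ hden]
        have hDge : 2*ρ ≤ D i := le_of_lt hfar
        have hd2 : 2*ρ*(D i) ≤ (D i)^2 := by
          rw [sq]
          exact mul_le_mul_of_nonneg_right hDge (hDnonneg i)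
        have hcalc : (ε/(3*Nx)) * (3*lam/8 * (2*ρ*(D i))) = L * (D i) := by
          rw [hlam, hρ]
          field_simp
          ring
        have base : L * D i ≤ (ε/(3*Nx)) * (3*lam/8 * (D i)^2) := by
          rw [← hcalc]
          have hmono : 3*lam/8 * (2*ρ*(D i)) ≤ 3*lam/8 * (D i)^2 :=
            mul_le_mul_of_nonneg_left hd2 (by linarith)
          exact mul_le_mul_of_nonneg_left hmono (by positivity)
        calc e istar * (L * D i)
            ≤ e istar * ((ε/(3*Nx)) * (3*lam/8 * (D i)^2)) :=
              mul_le_mul_of_nonneg_left base estar_pos.le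
          _ = ε/(3*Nx) * e istar * (3*lam/8 * (D i)^2) := by ring
      have hfin : e i * g i ≤ (ε/(3*Nx)) * e istar := le_trans h2 h3
      have hpos2 : (0:ℝ) ≤ (2*ε/3) * e i := mul_nonneg (by linarith) hei_pos.le
      exact le_trans hfin (le_add_of_nonneg_left hpos2)
  exact assemble ε S e g (fun i => f (centers i) r c) (f Z r c) hS hSpos hepos
    (fun i => by rw [hg]) (sum_step ε e g S hS istar hepos hNxR hε key)

lemma final_bound (hd : 0 < d) (hNx : 0 < Nx) (L ε : ℝ) (hL : 0 < L) (hε : 0 < ε)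
    (f : Matrix (Fin d) (Fin n) ℝ → Matrix (Fin d) (Fin n) ℝ)
    (hfLip : ∀ Z₁ Z₂, frob (f Z₁ - f Z₂) ≤ L * frob (Z₁ - Z₂))
    (centers : Fin Nx → Matrix (Fin d) (Fin n) ℝ)
    (Z : Matrix (Fin d) (Fin n) ℝ) (istar : Fin Nx)
    (hstar : frob (Z - centers istar) ≤ ε / (3 * L)) (r : Fin d) (c : Fin n) :
    |(∑ i : Fin Nx, (Real.exp ((12*Nx*L^2/ε^2) * sAff centers i Z)
        / (∑ i' : Fin Nx, Real.exp ((12*Nx*L^2/ε^2) * sAff centers i' Z))) * f (centers i) r c)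
      - f Z r c| ≤ ε :=
  final_bound_gen hd hNx L ε _ hL hε rfl f hfLip centers Z istar hstar r c
    (fun i => Real.exp ((12*Nx*L^2/ε^2) * sAff centers i Z)) (fun i => rfl)

end AttnApprox

/-- **Approximation of Lipschitz functions on small domains by single-head attention.**
Let `f : ℝ^{d×n} → ℝ^{d×n}` be `L`-Lipschitz in Frobenius norm (an `L`-Lipschitz
extension of the target to all of `ℝ^{d×n}`, as hypothesized), and suppose the domain
`𝒳` is contained in the union of `N_x` closed Frobenius balls of radius `ε/(3L)`.
Then there are a sum-of-linear-transformations layer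
`Linear : ℝ^{d×n} → ℝ^{(2dN_x+1)×2dN_x}` and a single-head self-attention layer
(hidden width proportional to `d·N_x`) with weights `W_K, W_Q, W_V, W_O` such that
for every `Z ∈ 𝒳` the attention output is entrywise within `ε` of `f(Z)`. -/
theorem lipschitz_small_domain_attention_approximation
    (d n : ℕ) (hd : 0 < d) (hn : 0 < n)
    (L ε : ℝ) (hL : 0 < L) (hε : 0 < ε)
    (𝒳 : Set (Matrix (Fin d) (Fin n) ℝ))
    (f : Matrix (Fin d) (Fin n) ℝ → Matrix (Fin d) (Fin n) ℝ)
    (hfLip : ∀ Z₁ Z₂ : Matrix (Fin d) (Fin n) ℝ, frob (f Z₁ - f Z₂) ≤ L * frob (Z₁ - Z₂))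
    (Nx : ℕ) (hNx : 0 < Nx)
    (centers : Fin Nx → Matrix (Fin d) (Fin n) ℝ)
    (hcover : 𝒳 ⊆ ⋃ i : Fin Nx, {Z | frob (Z - centers i) ≤ ε / (3 * L)}) :
    ∃ (H : ℕ) (P : Fin H → Matrix (Fin (2 * d * Nx + 1)) (Fin d) ℝ)
      (Q : Fin H → Matrix (Fin n) (Fin (2 * d * Nx)) ℝ)
      (Rb : Matrix (Fin (2 * d * Nx + 1)) (Fin (2 * d * Nx)) ℝ)
      (dA : ℕ) (WK WQ : Matrix (Fin dA) (Fin (2 * d * Nx + 1)) ℝ)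
      (WV : Matrix (Fin d) (Fin (2 * d * Nx + 1)) ℝ)
      (WO : Matrix (Fin (2 * d * Nx)) (Fin n) ℝ),
      ∀ Z ∈ 𝒳, ∀ (r : Fin d) (c : Fin n),
        |(WV * (∑ i, P i * Z * Q i + Rb) *
            softmax ((WK * (∑ i, P i * Z * Q i + Rb))ᵀ *
              (WQ * (∑ i, P i * Z * Q i + Rb))) * WO) r c
          - f Z r c| ≤ ε := by
  classical
  refine ⟨d, AttnApprox.Pmat d Nx, AttnApprox.Qmat d Nx n (12*Nx*L^2/ε^2) centers,
    AttnApprox.Rmat d Nx n (12*Nx*L^2/ε^2) centers,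
    2*d*Nx+1, 1, AttnApprox.Gmat d Nx, AttnApprox.WVmat d Nx,
    AttnApprox.WOmat d Nx n (fun i => f (centers i)), ?_⟩
  intro Z hZ r c
  rw [Matrix.one_mul]
  rw [AttnApprox.output_eq hd hNx (12*Nx*L^2/ε^2) centers Z _
    (AttnApprox.Y_apply_zero hd (12*Nx*L^2/ε^2) centers Z)
    (AttnApprox.Y_apply_succ hd (12*Nx*L^2/ε^2) centers Z)
    (fun i => f (centers i)) r c]
  obtain ⟨istar, histar⟩ : ∃ i : Fin Nx, frob (Z - centers i) ≤ ε / (3 * L) := by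
    have := hcover hZ
    simpa [Set.mem_iUnion] using this
  exact AttnApprox.final_bound hd hNx L ε hL hε f hfLip centers Z istar histar r c
end

section
/- Let d, n, G be positive integers, R > 0, B₀ > 0, let v_0,…,v_{G−1} ∈ ℝ^{dn} and u_0,…,u_{G−1} ∈ ℝ^{dn}, and let Y_{i,j} ∈ ℝ^{d×n} (0 ≤ i,j ≤ G−1) be matrices all of whose entries lie in (−B₀, B₀). Then there exist two sum-of-linear-transformations layers Linear_K, Linear_Q and matrices W_K, W_Q, W_V, W_O of suitable dimensions such that for all Z_K, Z_Q ∈ ℝ^{d×n}, with Z̃_K, Z̃_Q ∈ ℝ^{dn} the column-stackings of Z_K, Z_Q: W_V·Linear_K(Z_K) · Softmax((W_K·Linear_K(Z_K))ᵀ · W_Q·Linear_Q(Z_Q)) · W_O = Σ_{i,j} (exp(R(v_iᵀZ̃_K + u_jᵀZ̃_Q − ½‖v_i‖₂² − ½‖u_j‖₂²)) / Σ_{i',j'} exp(R(v_{i'}ᵀZ̃_K + u_{j'}ᵀZ̃_Q − ½‖v_{i'}‖₂² − ½‖u_{j'}‖₂²))) · Y_{i,j}. -/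
open Matrix

/-- Column stacking of a `d × n` matrix into a vector of length `d*n`:
the entry at index `idx` is `Z (idx % d) (idx / d)`, so the columns
`z_1, …, z_n` are stacked in order. -/
def colStack {d n : ℕ} (hd : 0 < d) (Z : Matrix (Fin d) (Fin n) ℝ) :
    Fin (d * n) → ℝ :=
  fun idx => Z ⟨idx.1 % d, Nat.mod_lt _ hd⟩ ⟨idx.1 / d, Nat.div_lt_of_lt_mul idx.2⟩

namespace CAaux

/-- generalized column-wise softmax -/
noncomputable def smax {I J : Type*} [Fintype I] (M : Matrix I J ℝ) : Matrix I J ℝ :=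
  Matrix.of fun i j => Real.exp (M i j) / ∑ k, Real.exp (M k j)

lemma softmax_submatrix {a b : ℕ} {I J : Type*} [Fintype I]
    (M : Matrix I J ℝ) (e : Fin a ≃ I) (f : Fin b → J) :
    softmax (M.submatrix e f) = (smax M).submatrix (e : Fin a → I) f := by
  ext i j
  simp only [softmax, smax, Matrix.submatrix_apply, Matrix.of_apply]
  congr 1
  exact Equiv.sum_comp e (fun k => Real.exp (M k (f j)))

variable {d n G : ℕ}

/-- key-side auxiliary index type (rows of K/Q matrices fed to attention) -/
abbrev KI (d n : ℕ) := (Fin (d * n) ⊕ Fin 1) ⊕ Fin n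

/-- key token index type -/
abbrev TI (G n : ℕ) := (Fin G × Fin G) × Fin n

def kidx (hd : 0 < d) (h : Fin (d * n)) : Fin d := ⟨h.1 % d, Nat.mod_lt _ hd⟩
def cidx (h : Fin (d * n)) : Fin n := ⟨h.1 / d, Nat.div_lt_of_lt_mul h.2⟩

lemma colStack_eq (hd : 0 < d) (Z : Matrix (Fin d) (Fin n) ℝ) (h : Fin (d * n)) :
    colStack hd Z h = Z (kidx hd h) (cidx h) := rfl

noncomputable def mPK (hd : 0 < d) (h : Fin (d * n)) :
    Matrix (Fin d ⊕ KI d n) (Fin d) ℝ :=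
  Matrix.of fun row r =>
    if row = Sum.inr (Sum.inl (Sum.inr 0)) ∧ r = kidx hd h then 1 else 0

noncomputable def mQK (R : ℝ) (v : Fin G → Fin (d * n) → ℝ) (h : Fin (d * n)) :
    Matrix (Fin n) (TI G n) ℝ :=
  Matrix.of fun c col => if c = cidx h then R * v col.1.1 h else 0

noncomputable def mRbK (R : ℝ) (v u : Fin G → Fin (d * n) → ℝ)
    (Y : Fin G → Fin G → Matrix (Fin d) (Fin n) ℝ) :
    Matrix (Fin d ⊕ KI d n) (TI G n) ℝ :=
  Matrix.of fun row col =>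
    match row with
    | Sum.inl r => ((n : ℝ) + 1) * Y col.1.1 col.1.2 r col.2 - ∑ c₂, Y col.1.1 col.1.2 r c₂
    | Sum.inr (Sum.inl (Sum.inl t)) => u col.1.2 t
    | Sum.inr (Sum.inl (Sum.inr _)) =>
        R * (0 - (∑ t, v col.1.1 t ^ 2) / 2 - (∑ t, u col.1.2 t ^ 2) / 2)
    | Sum.inr (Sum.inr c'') => if c'' = col.2 then Real.log 2 else 0

def mWK : Matrix (KI d n) (Fin d ⊕ KI d n) ℝ :=
  Matrix.of fun t m => if m = Sum.inr t then 1 else 0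

def mWV : Matrix (Fin d) (Fin d ⊕ KI d n) ℝ :=
  Matrix.of fun r m => if m = Sum.inl r then 1 else 0

noncomputable def mPQ (hd : 0 < d) (R : ℝ) (h : Fin (d * n)) :
    Matrix (KI d n) (Fin d) ℝ :=
  Matrix.of fun row r =>
    if row = Sum.inl (Sum.inl h) ∧ r = kidx hd h then R else 0

def mQQ (h : Fin (d * n)) : Matrix (Fin n) (Fin n) ℝ :=
  Matrix.of fun c _ => if c = cidx h then 1 else 0

def mRbQ : Matrix (KI d n) (Fin n) ℝ :=
  Matrix.of fun row col =>
    match row with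
    | Sum.inl (Sum.inl _) => 0
    | Sum.inl (Sum.inr _) => 1
    | Sum.inr c'' => if c'' = col then 1 else 0

section entries

variable (hd : 0 < d) (R : ℝ) (v u : Fin G → Fin (d * n) → ℝ)
    (Y : Fin G → Fin G → Matrix (Fin d) (Fin n) ℝ)
    (ZK ZQ : Matrix (Fin d) (Fin n) ℝ)

noncomputable def LK : Matrix (Fin d ⊕ KI d n) (TI G n) ℝ :=
  ∑ h, mPK hd h * ZK * mQK R v h + mRbK R v u Y

noncomputable def LQ : Matrix (KI d n) (Fin n) ℝ :=
  ∑ h, @HMul.hMul _ _ _ Matrix.instHMulOfFintypeOfMulOfAddCommMonoid (mPQ hd R h * ZQ) (mQQ h) + mRbQ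

lemma heads_K_apply (row : Fin d ⊕ KI d n) (col : TI G n) :
    (∑ h : Fin (d * n), mPK hd h * ZK * mQK R v h) row col
      = if row = Sum.inr (Sum.inl (Sum.inr 0)) then
          R * ∑ t, v col.1.1 t * colStack hd ZK t else 0 := by
  simp only [Matrix.sum_apply]
  have : ∀ h : Fin (d * n), (mPK hd h * ZK * mQK R v h) row col
      = if row = Sum.inr (Sum.inl (Sum.inr 0)) then
          R * (v col.1.1 h * colStack hd ZK h) else 0 := by
    intro h
    simp only [Matrix.mul_apply, mPK, mQK, Matrix.of_apply, ite_and, colStack_eq]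
    simp [Finset.sum_ite_eq', Finset.mul_sum, Finset.sum_mul]
    split <;> simp [mul_comm, mul_assoc, mul_left_comm]
  rw [Finset.sum_congr rfl fun h _ => this h]
  split <;> simp [Finset.mul_sum]

lemma heads_Q_apply (row : KI d n) (col : Fin n) :
    (∑ h : Fin (d * n), mPQ hd R h * ZQ * mQQ h) row col
      = Sum.elim (Sum.elim (fun t => R * colStack hd ZQ t) (fun _ => 0)) (fun _ => 0) row := by
  simp only [Matrix.sum_apply]
  have : ∀ h : Fin (d * n), (mPQ hd R h * ZQ * mQQ h) row col
      = if row = Sum.inl (Sum.inl h) then R * colStack hd ZQ h else 0 := by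
    intro h
    simp only [Matrix.mul_apply, mPQ, mQQ, Matrix.of_apply, ite_and, colStack_eq]
    simp [Finset.sum_ite_eq', Finset.mul_sum, Finset.sum_mul]
  rw [Finset.sum_congr rfl fun h _ => this h]
  match row with
  | Sum.inl (Sum.inl t) => simp
  | Sum.inl (Sum.inr z) => simp
  | Sum.inr c'' => simp


/-- score exponent -/
noncomputable def sc (i j : Fin G) : ℝ :=
  R * ((∑ t, v i t * colStack hd ZK t) + (∑ t, u j t * colStack hd ZQ t)
    - (∑ t, v i t ^ 2) / 2 - (∑ t, u j t ^ 2) / 2)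

/-- the score matrix fed to softmax -/
noncomputable def SCm : Matrix (TI G n) (Fin n) ℝ :=
  ((mWK : Matrix (KI d n) (Fin d ⊕ KI d n) ℝ) * LK hd R v u Y ZK)ᵀ * LQ hd R ZQ

lemma WK_mul_apply (t : KI d n) (col : TI G n) :
    ((mWK : Matrix (KI d n) (Fin d ⊕ KI d n) ℝ) * LK hd R v u Y ZK) t col
      = LK hd R v u Y ZK (Sum.inr t) col := by
  simp [Matrix.mul_apply, mWK, ite_mul]

lemma WV_mul_apply (r : Fin d) (col : TI G n) :
    ((mWV : Matrix (Fin d) (Fin d ⊕ KI d n) ℝ) * LK hd R v u Y ZK) r col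
      = LK hd R v u Y ZK (Sum.inl r) col := by
  simp [Matrix.mul_apply, mWV, ite_mul]

lemma LK_apply_inl (r : Fin d) (col : TI G n) :
    LK hd R v u Y ZK (Sum.inl r) col
      = ((n : ℝ) + 1) * Y col.1.1 col.1.2 r col.2 - ∑ c₂, Y col.1.1 col.1.2 r c₂ := by
  simp [LK, Matrix.add_apply, heads_K_apply, mRbK]

lemma score_apply (col : TI G n) (c : Fin n) :
    SCm hd R v u Y ZK ZQ col c
      = sc hd R v u ZK ZQ col.1.1 col.1.2 + (if col.2 = c then Real.log 2 else 0) := by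
  rw [SCm, Matrix.mul_apply]
  simp only [Matrix.transpose_apply, WK_mul_apply hd R v u Y ZK]
  rw [Fintype.sum_sum_type, Fintype.sum_sum_type]
  have e1 : ∀ t : Fin (d * n),
      LK hd R v u Y ZK (Sum.inr (Sum.inl (Sum.inl t))) col
        * LQ hd R ZQ (Sum.inl (Sum.inl t)) c
      = u col.1.2 t * (R * colStack hd ZQ t) := by
    intro t
    simp [LK, LQ, Matrix.add_apply, heads_K_apply, heads_Q_apply, mRbK, mRbQ]
  have e2 : ∀ z : Fin 1,
      LK hd R v u Y ZK (Sum.inr (Sum.inl (Sum.inr z))) col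
        * LQ hd R ZQ (Sum.inl (Sum.inr z)) c
      = R * (∑ t, v col.1.1 t * colStack hd ZK t)
        + R * (0 - (∑ t, v col.1.1 t ^ 2) / 2 - (∑ t, u col.1.2 t ^ 2) / 2) := by
    intro z
    have hz : z = 0 := Subsingleton.elim _ _
    subst hz
    simp [LK, LQ, Matrix.add_apply, heads_K_apply, heads_Q_apply, mRbK, mRbQ]
  have e3 : ∀ c'' : Fin n,
      LK hd R v u Y ZK (Sum.inr (Sum.inr c'')) col * LQ hd R ZQ (Sum.inr c'') c
      = if c'' = col.2 ∧ c'' = c then Real.log 2 else 0 := by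
    intro c''
    simp only [LK, LQ, Matrix.add_apply, heads_K_apply, heads_Q_apply, mRbK, mRbQ,
      Matrix.of_apply]
    simp only [ite_and]
    split <;> split <;> simp_all
  rw [Finset.sum_congr rfl fun t _ => e1 t, Finset.sum_congr rfl fun z _ => e2 z,
    Finset.sum_congr rfl fun c'' _ => e3 c'']
  have e4 : ∑ c'' : Fin n, (if c'' = col.2 ∧ c'' = c then Real.log 2 else 0)
      = if col.2 = c then Real.log 2 else 0 := by
    by_cases h : col.2 = c
    · subst h
      simp
    · rw [Finset.sum_eq_zero, if_neg h]
      intro c'' _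
      rw [if_neg]
      rintro ⟨rfl, rfl⟩
      exact h rfl
  rw [e4]
  simp only [sc, Finset.sum_const, Finset.card_univ, Fintype.card_fin]
  have : ∑ t : Fin (d * n), u col.1.2 t * (R * colStack hd ZQ t)
      = R * ∑ t, u col.1.2 t * colStack hd ZQ t := by
    rw [Finset.mul_sum]; exact Finset.sum_congr rfl fun t _ => by ring
  rw [this]
  ring

lemma exp_score (col : TI G n) (c : Fin n) :
    Real.exp (SCm hd R v u Y ZK ZQ col c)
      = Real.exp (sc hd R v u ZK ZQ col.1.1 col.1.2) * (if col.2 = c then 2 else 1) := by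
  rw [score_apply, Real.exp_add]
  by_cases h : col.2 = c <;> simp [h, Real.exp_log two_pos]

lemma sum_ite_two (c : Fin n) :
    ∑ c'' : Fin n, (if c'' = c then (2:ℝ) else 1) = (n : ℝ) + 1 := by
  have h : ∀ c'' : Fin n, (if c'' = c then (2:ℝ) else 1) = 1 + (if c'' = c then 1 else 0) := by
    intro c''; split <;> norm_num
  simp [h, Finset.sum_add_distrib]

lemma smax_score_apply (col : TI G n) (c : Fin n) :
    smax (SCm hd R v u Y ZK ZQ) col c
      = Real.exp (sc hd R v u ZK ZQ col.1.1 col.1.2) * (if col.2 = c then 2 else 1)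
        / (((n : ℝ) + 1) * ∑ i, ∑ j, Real.exp (sc hd R v u ZK ZQ i j)) := by
  simp only [smax, Matrix.of_apply]
  rw [exp_score, Finset.sum_congr rfl fun col' _ => exp_score hd R v u Y ZK ZQ col' c]
  congr 1
  rw [Fintype.sum_prod_type, Fintype.sum_prod_type]
  simp only []
  rw [Finset.mul_sum]
  refine Finset.sum_congr rfl fun i _ => ?_
  rw [Finset.mul_sum]
  refine Finset.sum_congr rfl fun j _ => ?_
  rw [← Finset.mul_sum, sum_ite_two]
  ring

lemma structured (hG : 0 < G) :
    (mWV : Matrix (Fin d) (Fin d ⊕ KI d n) ℝ) * LK hd R v u Y ZK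
        * smax (SCm hd R v u Y ZK ZQ)
      = ∑ i : Fin G, ∑ j : Fin G,
          (Real.exp (sc hd R v u ZK ZQ i j)
            / ∑ i' : Fin G, ∑ j' : Fin G, Real.exp (sc hd R v u ZK ZQ i' j')) • Y i j := by
  have : Nonempty (Fin G) := ⟨⟨0, hG⟩⟩
  have hE : (0:ℝ) < ∑ i : Fin G, ∑ j : Fin G, Real.exp (sc hd R v u ZK ZQ i j) :=
    Finset.sum_pos (fun i _ => Finset.sum_pos (fun j _ => Real.exp_pos _)
      Finset.univ_nonempty) Finset.univ_nonempty
  have hn1 : ((n : ℝ) + 1) ≠ 0 := by positivity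
  ext r c
  rw [Matrix.mul_apply]
  rw [Finset.sum_congr rfl fun col (_ : col ∈ Finset.univ) => by
    rw [WV_mul_apply, LK_apply_inl, smax_score_apply]]
  rw [Fintype.sum_prod_type]
  have inner : ∀ i j : Fin G,
      (∑ c' : Fin n,
        (((n : ℝ) + 1) * Y i j r c' - ∑ c₂, Y i j r c₂)
          * (Real.exp (sc hd R v u ZK ZQ i j) * (if c' = c then 2 else 1)
            / (((n : ℝ) + 1) * ∑ i', ∑ j', Real.exp (sc hd R v u ZK ZQ i' j'))))
      = (Real.exp (sc hd R v u ZK ZQ i j)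
          / ∑ i', ∑ j', Real.exp (sc hd R v u ZK ZQ i' j')) * Y i j r c := by
    intro i j
    have key : ∑ c' : Fin n,
        (((n : ℝ) + 1) * Y i j r c' - ∑ c₂, Y i j r c₂) * (if c' = c then (2:ℝ) else 1)
        = ((n : ℝ) + 1) * Y i j r c := by
      have ht : ∀ c' : Fin n, (((n : ℝ) + 1) * Y i j r c' - ∑ c₂, Y i j r c₂)
          * (if c' = c then (2:ℝ) else 1)
          = (((n : ℝ) + 1) * Y i j r c' - ∑ c₂, Y i j r c₂)
            + (if c' = c then ((n : ℝ) + 1) * Y i j r c' - ∑ c₂, Y i j r c₂ else 0) := by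
        intro c'; split <;> ring
      rw [Finset.sum_congr rfl fun c' _ => ht c']
      rw [Finset.sum_add_distrib, Finset.sum_ite_eq' Finset.univ c]
      simp only [Finset.mem_univ, if_true, Finset.sum_sub_distrib, Finset.sum_const,
        Finset.card_univ, Fintype.card_fin, ← Finset.mul_sum, nsmul_eq_mul]
      ring
    have step1 : ∑ c' : Fin n,
        (((n : ℝ) + 1) * Y i j r c' - ∑ c₂, Y i j r c₂)
          * (Real.exp (sc hd R v u ZK ZQ i j) * (if c' = c then 2 else 1)
            / (((n : ℝ) + 1) * ∑ i', ∑ j', Real.exp (sc hd R v u ZK ZQ i' j')))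
        = (∑ c' : Fin n,
            (((n : ℝ) + 1) * Y i j r c' - ∑ c₂, Y i j r c₂) * (if c' = c then (2:ℝ) else 1))
          * (Real.exp (sc hd R v u ZK ZQ i j)
            / (((n : ℝ) + 1) * ∑ i', ∑ j', Real.exp (sc hd R v u ZK ZQ i' j'))) := by
      rw [Finset.sum_mul]
      exact Finset.sum_congr rfl fun c' _ => by ring
    rw [step1, key]
    have hE0 : (∑ i' : Fin G, ∑ j' : Fin G, Real.exp (sc hd R v u ZK ZQ i' j')) ≠ 0 :=
      ne_of_gt hE
    field_simp
  rw [Finset.sum_congr rfl fun p (_ : p ∈ Finset.univ) => inner p.1 p.2]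
  simp only [Matrix.sum_apply, Matrix.smul_apply, smul_eq_mul]
  exact Fintype.sum_prod_type' (f := fun i j =>
    (Real.exp (sc hd R v u ZK ZQ i j)
      / ∑ i' : Fin G, ∑ j' : Fin G, Real.exp (sc hd R v u ZK ZQ i' j')) * Y i j r c)

end entries

def eA (d n : ℕ) : KI d n ≃ Fin (d * n + 1 + n) :=
  (Equiv.sumCongr finSumFinEquiv (Equiv.refl (Fin n))).trans finSumFinEquiv

def eM1 (d n : ℕ) : (Fin d ⊕ KI d n) ≃ Fin (d + (d * n + 1 + n)) :=
  (Equiv.sumCongr (Equiv.refl (Fin d)) (eA d n)).trans finSumFinEquiv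

def eM2 (G n : ℕ) : TI G n ≃ Fin (G * G * n) :=
  (Equiv.prodCongr finProdFinEquiv (Equiv.refl (Fin n))).trans finProdFinEquiv

end CAaux

/-- **Single-head cross-attention exactly realizes a softmax mixture of fixed matrices.**
Given `R > 0`, centers `v_i, u_j ∈ ℝ^{dn}` and matrices `Y_{i,j} ∈ ℝ^{d×n}` with
entries in `(−B₀, B₀)`, there are two sum-of-linear-transformations layers
`Linear_K, Linear_Q` and weights `W_K, W_Q, W_V, W_O` such that for all `Z_K, Z_Q`,
the cross-attention output
`W_V·Linear_K(Z_K)·Softmax((W_K·Linear_K(Z_K))ᵀ·(W_Q·Linear_Q(Z_Q)))·W_O`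
equals the softmax mixture `∑_{i,j} w_{i,j}(Z̃_K, Z̃_Q) · Y_{i,j}` with additively
combined scores `v_iᵀZ̃_K + u_jᵀZ̃_Q − ½‖v_i‖² − ½‖u_j‖²` at inverse temperature `R`,
`Z̃` denoting column stacking. -/
theorem crossattention_realizes_softmax_mixture
    (d n G : ℕ) (hd : 0 < d) (hn : 0 < n) (hG : 0 < G)
    (R B₀ : ℝ) (hR : 0 < R) (hB₀ : 0 < B₀)
    (v u : Fin G → Fin (d * n) → ℝ)
    (Y : Fin G → Fin G → Matrix (Fin d) (Fin n) ℝ)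
    (hY : ∀ i j r c, -B₀ < Y i j r c ∧ Y i j r c < B₀) :
    ∃ (M₁ M₂ M₁' M₂' : ℕ)
      (HK : ℕ) (PK : Fin HK → Matrix (Fin M₁) (Fin d) ℝ)
      (QK : Fin HK → Matrix (Fin n) (Fin M₂) ℝ)
      (RbK : Matrix (Fin M₁) (Fin M₂) ℝ)
      (HQ : ℕ) (PQ : Fin HQ → Matrix (Fin M₁') (Fin d) ℝ)
      (QQ : Fin HQ → Matrix (Fin n) (Fin M₂') ℝ)
      (RbQ : Matrix (Fin M₁') (Fin M₂') ℝ)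
      (dA : ℕ) (WK : Matrix (Fin dA) (Fin M₁) ℝ) (WQ : Matrix (Fin dA) (Fin M₁') ℝ)
      (WV : Matrix (Fin d) (Fin M₁) ℝ)
      (WO : Matrix (Fin M₂') (Fin n) ℝ),
      ∀ ZK ZQ : Matrix (Fin d) (Fin n) ℝ,
        WV * (∑ i, PK i * ZK * QK i + RbK) *
            softmax ((WK * (∑ i, PK i * ZK * QK i + RbK))ᵀ *
              (WQ * (∑ i, PQ i * ZQ * QQ i + RbQ))) * WO
          = ∑ i : Fin G, ∑ j : Fin G,
              (Real.exp (R * ((∑ t, v i t * colStack hd ZK t)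
                  + (∑ t, u j t * colStack hd ZQ t)
                  - (∑ t, v i t ^ 2) / 2 - (∑ t, u j t ^ 2) / 2)) /
                ∑ i' : Fin G, ∑ j' : Fin G,
                  Real.exp (R * ((∑ t, v i' t * colStack hd ZK t)
                    + (∑ t, u j' t * colStack hd ZQ t)
                    - (∑ t, v i' t ^ 2) / 2 - (∑ t, u j' t ^ 2) / 2))) • Y i j := by
  classical
  open CAaux in
  refine ⟨d + (d * n + 1 + n), G * G * n, d * n + 1 + n, n, d * n,
    fun h => (mPK hd h).submatrix ⇑(eM1 d n).symm id,
    fun h => (mQK R v h).submatrix id ⇑(eM2 G n).symm,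
    (mRbK R v u Y).submatrix ⇑(eM1 d n).symm ⇑(eM2 G n).symm,
    d * n,
    fun h => (mPQ hd R h).submatrix ⇑(eA d n).symm id,
    fun h => mQQ h,
    mRbQ.submatrix ⇑(eA d n).symm id,
    d * n + 1 + n,
    mWK.submatrix ⇑(eA d n).symm ⇑(eM1 d n).symm,
    1,
    mWV.submatrix id ⇑(eM1 d n).symm,
    1, ?_⟩
  intro ZK ZQ
  have hLK : (∑ h : Fin (d * n),
        (mPK hd h).submatrix ⇑(eM1 d n).symm id * ZK * (mQK R v h).submatrix id ⇑(eM2 G n).symm)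
        + (mRbK R v u Y).submatrix ⇑(eM1 d n).symm ⇑(eM2 G n).symm
      = (LK hd R v u Y ZK).submatrix ⇑(eM1 d n).symm ⇑(eM2 G n).symm := by
    ext p q
    simp [LK, Matrix.sum_apply, Matrix.add_apply, Matrix.submatrix_apply, Matrix.mul_apply]
  have hLQ : (∑ h : Fin (d * n),
        (mPQ hd R h).submatrix ⇑(eA d n).symm id * ZQ * mQQ h)
        + mRbQ.submatrix ⇑(eA d n).symm id
      = (LQ hd R ZQ).submatrix ⇑(eA d n).symm id := by
    ext p q
    simp [LQ, Matrix.sum_apply, Matrix.add_apply, Matrix.submatrix_apply, Matrix.mul_apply]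
  rw [hLK, hLQ, Matrix.one_mul, Matrix.mul_one]
  rw [Matrix.submatrix_mul_equiv mWK (LK hd R v u Y ZK) ⇑(eA d n).symm (eM1 d n).symm
    ⇑(eM2 G n).symm]
  rw [Matrix.transpose_submatrix]
  rw [Matrix.submatrix_mul_equiv ((mWK * LK hd R v u Y ZK)ᵀ) (LQ hd R ZQ) ⇑(eM2 G n).symm
    (eA d n).symm id]
  rw [softmax_submatrix _ (eM2 G n).symm id]
  rw [Matrix.submatrix_mul_equiv mWV (LK hd R v u Y ZK) id (eM1 d n).symm ⇑(eM2 G n).symm]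
  rw [Matrix.submatrix_mul_equiv (mWV * LK hd R v u Y ZK)
    (smax ((mWK * LK hd R v u Y ZK)ᵀ * LQ hd R ZQ)) id (eM2 G n).symm id]
  rw [Matrix.submatrix_id_id]
  have := structured hd R v u Y ZK ZQ hG
  rw [SCm] at this
  rw [this]
  simp only [sc]
end
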